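/- There is a constant C > 0 such that for every integer k ≥ 2 the following holds. For each i ∈ {1, …, k}, let q_i be the least positive integer q such that there exists an integer p with (i−1)/k ≤ p/q ≤ i/k (such q exists, since q = k works). Then ∑_{i=1}^{k} q_i ≤ C · k^{3/2} · (log k)^{1/2}. -/

import Mathlib

open Finset
attribute [local instance] Classical.propDecidable


lemma fiber_card (k q' r : ℕ) (hk : 0 < k) (hq' : 0 < q') (hr : r ≠ 0) :
    ((Finset.Icc 0 k).filter (fun j => (j * q') % k = r)).card ≤ Nat.gcd q' k := by
  set g := Nat.gcd q' k with hg
  have hgk : g ∣ k := Nat.gcd_dvd_right _ _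
  have hgq : g ∣ q' := Nat.gcd_dvd_left _ _
  have hg0 : 0 < g := Nat.gcd_pos_of_pos_left _ hq'
  set h := k / g with hh
  have hkgh : k = g * h := (Nat.mul_div_cancel' hgk).symm
  have hh0 : 0 < h := by
    rcases Nat.eq_zero_or_pos h with h0 | h0
    · rw [h0, Nat.mul_zero] at hkgh; omega
    · exact h0
  have hmem : ∀ j ∈ (Finset.Icc 0 k).filter (fun j => (j * q') % k = r), j < k := by
    intro j hj
    simp only [Finset.mem_filter, Finset.mem_Icc] at hj
    rcases Nat.lt_or_ge j k with h' | h'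
    · exact h'
    · exfalso
      have : j = k := le_antisymm hj.1.2 h'
      subst this
      rw [Nat.mul_mod_right] at hj
      exact hr hj.2.symm
  -- elements are congruent mod h
  have hcong : ∀ j1 ∈ (Finset.Icc 0 k).filter (fun j => (j * q') % k = r),
      ∀ j2 ∈ (Finset.Icc 0 k).filter (fun j => (j * q') % k = r),
      j1 ≤ j2 → j1 / h = j2 / h → j1 = j2 := by
    intro j1 hj1 j2 hj2 hle heq
    simp only [Finset.mem_filter, Finset.mem_Icc] at hj1 hj2
    have hmod : j1 * q' ≡ j2 * q' [MOD k] := by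
      unfold Nat.ModEq; rw [hj1.2, hj2.2]
    have hdvd : k ∣ j2 * q' - j1 * q' :=
      (Nat.modEq_iff_dvd' (Nat.mul_le_mul_right _ hle)).mp hmod
    rw [← Nat.sub_mul] at hdvd
    set d := j2 - j1 with hd
    set q'' := q' / g with hq''
    have hq'eq : q' = g * q'' := (Nat.mul_div_cancel' hgq).symm
    have hdvd2 : h ∣ d * q'' := by
      have : g * h ∣ g * (d * q'') := by
        rw [← hkgh]
        calc k ∣ d * q' := hdvd
          _ = g * (d * q'') := by rw [hq'eq]; ring
      exact (mul_dvd_mul_iff_left (by omega : g ≠ 0)).mp this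
    have hcop : Nat.Coprime h q'' := by
      have := Nat.coprime_div_gcd_div_gcd (m := q') (n := k) (by rw [← hg]; omega)
      rw [← hg] at this
      exact (this.symm : Nat.Coprime (k / g) (q' / g))
    have hdh : h ∣ d := (Nat.Coprime.dvd_of_dvd_mul_right hcop hdvd2)
    -- now j1 ≡ j2 mod h and equal quotients
    have hm : j1 % h = j2 % h := (Nat.modEq_iff_dvd' hle).mpr hdh
    have e1 := Nat.div_add_mod j1 h
    have e2 := Nat.div_add_mod j2 h
    rw [heq] at e1
    rw [hm] at e1
    omega
  apply le_trans (Finset.card_le_card_of_injOn (fun j => j / h) ?_ ?_)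
    (le_of_eq (Finset.card_range g))
  · intro j hj
    rw [Finset.mem_coe, Finset.mem_range]
    have hjk := hmem j hj
    have : j < h * g := by rw [mul_comm g h] at hkgh; omega
    exact Nat.div_lt_of_lt_mul this
  · intro j1 hj1 j2 hj2 he
    rcases le_total j1 j2 with hle | hle
    · exact hcong j1 hj1 j2 hj2 hle he
    · exact (hcong j2 hj2 j1 hj1 hle he.symm).symm

lemma Dbound (k Q q' : ℕ) (hk : 0 < k) (hq' : 0 < q') :
    (((Finset.Icc 0 k)).filter (fun j : ℕ => ∃ p : ℤ,
        0 < |p * (k:ℤ) - (j : ℤ) * (q':ℤ)| ∧ |p * (k:ℤ) - (j : ℤ) * (q':ℤ)| * ((Q:ℤ) + 1) < (k:ℤ))).card * (Q + 1)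
      ≤ 2 * k := by
  classical
  set g := Nat.gcd q' k with hg
  have hgk : g ∣ k := Nat.gcd_dvd_right _ _
  have hg0 : 0 < g := Nat.gcd_pos_of_pos_left _ hq'
  set badJ := ((Finset.Icc 0 k)).filter (fun j : ℕ => ∃ p : ℤ,
        0 < |p * (k:ℤ) - (j : ℤ) * (q':ℤ)| ∧ |p * (k:ℤ) - (j : ℤ) * (q':ℤ)| * ((Q:ℤ) + 1) < (k:ℤ)) with hbadJ
  set S := (Finset.Ioo 0 k).filter
      (fun r => g ∣ r ∧ (r * (Q + 1) < k ∨ (k - r) * (Q + 1) < k)) with hS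
  -- the residue map sends badJ into S
  have hmap : ∀ j ∈ badJ, (j * q') % k ∈ S := by
    intro j hj
    simp only [hbadJ, Finset.mem_filter, Finset.mem_Icc] at hj
    obtain ⟨⟨_, hjk⟩, p, hp0, hpQ⟩ := hj
    set d : ℤ := (j : ℤ) * q' - p * k with hd
    have habs : |d| = |p * (k:ℤ) - (j:ℤ) * q'| := by rw [hd, abs_sub_comm]
    have hd0 : d ≠ 0 := by
      intro h0; rw [h0] at habs; simp at habs
      rw [← habs] at hp0; simp at hp0
    have hdsmall : |d| * ((Q:ℤ) + 1) < k := by rw [habs]; exact_mod_cast hpQ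
    have hdk : |d| < k := by nlinarith [abs_nonneg d, (by positivity : (0:ℤ) < (Q:ℤ)+1)]
    have hgd : (g : ℤ) ∣ d := by
      rw [hd]
      have h1 : (g:ℤ) ∣ (q' : ℤ) := Int.natCast_dvd_natCast.mpr (Nat.gcd_dvd_left _ _)
      have h2 : (g:ℤ) ∣ (k : ℤ) := Int.natCast_dvd_natCast.mpr hgk
      exact dvd_sub (Dvd.dvd.mul_left h1 _) (Dvd.dvd.mul_left h2 _)
    set r := (j * q') % k with hr
    have hrk : r < k := Nat.mod_lt _ hk
    have hmodeq : (r : ℤ) = ((j:ℤ) * q') % k := by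
      rw [hr, Int.natCast_mod]; push_cast; ring_nf
    simp only [hS, Finset.mem_filter, Finset.mem_Ioo]
    rcases lt_or_gt_of_ne hd0 with hneg | hpos
    · -- d < 0 : jq' = pk + d, r = k + d = k - |d|
      have habs' : |d| = -d := abs_of_neg hneg
      have hrd : (r : ℤ) = (k:ℤ) + d := by
        rw [hmodeq]
        have h2 : (j:ℤ) * q' = ((k:ℤ) + d) + (k:ℤ) * (p - 1) := by rw [hd]; ring
        rw [h2, Int.add_mul_emod_self_left]
        exact Int.emod_eq_of_lt (by omega) (by omega)
      have h1 : 0 < r ∧ r < k := by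
        constructor
        · by_contra h0
          have : r = 0 := by omega
          rw [this] at hrd; simp at hrd; omega
        · exact hrk
      refine ⟨h1, ?_, Or.inr ?_⟩
      · -- g ∣ r
        have : (g:ℤ) ∣ (r:ℤ) := by
          rw [hrd]
          exact dvd_add (Int.natCast_dvd_natCast.mpr hgk) hgd
        exact_mod_cast this
      · -- (k - r)*(Q+1) < k : k - r = |d|
        have hkr : ((k - r : ℕ) : ℤ) = |d| := by
          rw [Nat.cast_sub (le_of_lt hrk), hrd, habs']; ring
        have : ((k - r : ℕ) : ℤ) * ((Q:ℤ)+1) < (k:ℤ) := by rw [hkr]; exact hdsmall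
        exact_mod_cast this
    · -- d > 0 : r = d
      have habs' : |d| = d := abs_of_pos hpos
      have hrd : (r : ℤ) = d := by
        rw [hmodeq]
        have h2 : (j:ℤ) * q' = d + (k:ℤ) * p := by rw [hd]; ring
        rw [h2, Int.add_mul_emod_self_left]
        exact Int.emod_eq_of_lt (by omega) (by omega)
      have h1 : 0 < r ∧ r < k := ⟨by exact_mod_cast hrd ▸ hpos, hrk⟩
      refine ⟨h1, ?_, Or.inl ?_⟩
      · have : (g:ℤ) ∣ (r:ℤ) := hrd ▸ hgd
        exact_mod_cast this
      · have : (r:ℤ) * ((Q:ℤ)+1) < (k:ℤ) := by rw [hrd, ← habs']; exact hdsmall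
        exact_mod_cast this
  -- card badJ ≤ g * card S
  have hcard1 : badJ.card ≤ g * S.card := by
    apply Finset.card_le_mul_card_image_of_maps_to hmap
    intro r hr
    simp only [hS, Finset.mem_filter, Finset.mem_Ioo] at hr
    have := fiber_card k q' r hk hq' (by omega)
    apply le_trans (Finset.card_le_card ?_) this
    intro j hj
    simp only [hbadJ, Finset.mem_filter] at hj ⊢
    exact ⟨hj.1.1, hj.2⟩
  -- card S ≤ 2 * ((k-1) / (g * (Q+1)))
  have hcard2 : S.card ≤ 2 * ((k-1) / (g * (Q+1))) := by
    have hsub : S ⊆ ((Finset.Ioo 0 k).filter (fun r => g ∣ r ∧ r * (Q + 1) < k)) ∪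
        ((Finset.Ioo 0 k).filter (fun r => g ∣ r ∧ (k - r) * (Q + 1) < k)) := by
      intro r hr
      simp only [hS, Finset.mem_filter, Finset.mem_union, Finset.mem_Ioo] at hr ⊢
      tauto
    apply le_trans (Finset.card_le_card hsub)
    apply le_trans (Finset.card_union_le _ _)
    have b1 : ((Finset.Ioo 0 k).filter (fun r => g ∣ r ∧ r * (Q + 1) < k)).card
        ≤ (k-1) / (g * (Q+1)) := by
      apply le_trans (Finset.card_le_card_of_injOn (fun r => r / g)
        (t := Finset.Icc 1 ((k-1) / (g * (Q+1)))) ?_ ?_)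
        (le_of_eq (by rw [Nat.card_Icc, Nat.add_sub_cancel]))
      · intro r hr
        simp only [Finset.mem_coe, Finset.mem_filter, Finset.mem_Ioo] at hr
        obtain ⟨⟨hr0, hrk⟩, hgr, hlt⟩ := hr
        rw [Finset.mem_coe, Finset.mem_Icc]
        obtain ⟨t, ht⟩ := hgr
        subst ht
        simp only [Nat.mul_div_cancel_left _ hg0]
        have ht0 : 0 < t := by
          rcases Nat.eq_zero_or_pos t with h0 | h0
          · subst h0; simp at hr0
          · exact h0
        constructor
        · omega
        · rw [Nat.le_div_iff_mul_le (by positivity)]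
          have h' : t * (g * (Q+1)) < k := by
            calc t * (g * (Q+1)) = g * t * (Q+1) := by ring
              _ < k := hlt
          omega
      · intro r1 hr1 r2 hr2 he
        simp only [Finset.mem_coe, Finset.mem_filter, Finset.mem_Ioo] at hr1 hr2
        obtain ⟨t1, ht1⟩ := hr1.2.1
        obtain ⟨t2, ht2⟩ := hr2.2.1
        subst ht1; subst ht2
        have he' : g * t1 / g = g * t2 / g := he
        rw [Nat.mul_div_cancel_left _ hg0, Nat.mul_div_cancel_left _ hg0] at he'
        rw [he']
    have b2 : ((Finset.Ioo 0 k).filter (fun r => g ∣ r ∧ (k - r) * (Q + 1) < k)).card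
        ≤ (k-1) / (g * (Q+1)) := by
      apply le_trans (Finset.card_le_card_of_injOn (fun r => (k - r) / g)
        (t := Finset.Icc 1 ((k-1) / (g * (Q+1)))) ?_ ?_)
        (le_of_eq (by rw [Nat.card_Icc, Nat.add_sub_cancel]))
      · intro r hr
        simp only [Finset.mem_coe, Finset.mem_filter, Finset.mem_Ioo] at hr
        obtain ⟨⟨hr0, hrk⟩, hgr, hlt⟩ := hr
        rw [Finset.mem_coe, Finset.mem_Icc]
        have hgkr : g ∣ (k - r) := Nat.dvd_sub hgk hgr
        obtain ⟨t, ht⟩ := hgkr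
        have ht0 : 0 < t := by
          rcases Nat.eq_zero_or_pos t with h0 | h0
          · rw [h0, Nat.mul_zero] at ht; omega
          · exact h0
        beta_reduce
        rw [ht]
        simp only [Nat.mul_div_cancel_left _ hg0]
        constructor
        · omega
        · rw [Nat.le_div_iff_mul_le (by positivity)]
          have h' : t * (g * (Q+1)) < k := by
            calc t * (g * (Q+1)) = g * t * (Q+1) := by ring
              _ = (k - r) * (Q + 1) := by rw [ht]
              _ < k := hlt
          omega
      · intro r1 hr1 r2 hr2 he
        simp only [Finset.mem_coe, Finset.mem_filter, Finset.mem_Ioo] at hr1 hr2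
        obtain ⟨t1, ht1⟩ := Nat.dvd_sub hgk hr1.2.1
        obtain ⟨t2, ht2⟩ := Nat.dvd_sub hgk hr2.2.1
        have he' : (k - r1) / g = (k - r2) / g := he
        rw [ht1, ht2, Nat.mul_div_cancel_left _ hg0, Nat.mul_div_cancel_left _ hg0] at he'
        subst he'
        have h1 := hr1.1
        have h2 := hr2.1
        omega
    omega
  -- combine
  calc badJ.card * (Q+1) ≤ g * (2 * ((k-1) / (g * (Q+1)))) * (Q+1) := by
        apply Nat.mul_le_mul_right
        exact le_trans hcard1 (Nat.mul_le_mul_left _ hcard2)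
    _ = 2 * (g * ((k-1) / (g * (Q+1))) * (Q+1)) := by ring
    _ ≤ 2 * k := by
        have h1 : g * ((k-1) / (g * (Q+1))) * (Q+1) ≤ k := by
          have : (k-1) / (g * (Q+1)) * (g * (Q+1)) ≤ k - 1 := Nat.div_mul_le_self _ _
          calc g * ((k-1) / (g * (Q+1))) * (Q+1) = (k-1) / (g * (Q+1)) * (g * (Q+1)) := by ring
            _ ≤ k - 1 := this
            _ ≤ k := by omega
        omega

lemma key_lemma (k i Q : ℕ) (hk : 2 ≤ k) (hi1 : 1 ≤ i) (hik : i ≤ k) (qi : ℕ)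
    (hleast : IsLeast {m : ℕ | 0 < m ∧ ∃ p : ℤ,
        ((i : ℝ) - 1) / k ≤ (p : ℝ) / m ∧ (p : ℝ) / m ≤ (i : ℝ) / k} qi)
    (hQ1 : 1 ≤ Q) (hQ : Q < qi) :
    ∃ q' j : ℕ, ∃ p : ℤ, 1 ≤ q' ∧ q' * (Q + 1) ≤ 2 * k ∧ j ≤ k ∧ (i = j ∨ i = j + 1) ∧
      0 < |p * (k : ℤ) - (j : ℤ) * (q' : ℤ)| ∧
      |p * (k : ℤ) - (j : ℤ) * (q' : ℤ)| * ((Q : ℤ) + 1) < (k : ℤ) := by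
  have hK0 : (0:ℝ) < (k:ℝ) := by
    have : (0:ℕ) < k := by omega
    exact_mod_cast this
  obtain ⟨p, a, ha0, haQ, hap⟩ :=
    Real.exists_int_int_abs_mul_sub_le ((2*(i:ℝ) - 1)/(2*(k:ℝ))) (n := Q) (by omega)
  have haR : (0:ℝ) < (a:ℝ) := by exact_mod_cast ha0
  have hu : (0:ℝ) < ((Q:ℝ) + 1) := by positivity
  have hcastA : ((a.toNat : ℕ) : ℝ) = (a:ℝ) := by
    have h := Int.toNat_of_nonneg (le_of_lt ha0)
    exact_mod_cast h
  have hnotin : ¬ (((i:ℝ) - 1)/(k:ℝ) ≤ (p:ℝ)/(a:ℝ) ∧ (p:ℝ)/(a:ℝ) ≤ (i:ℝ)/(k:ℝ)) := by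
    intro hin
    have hamem : a.toNat ∈ {m : ℕ | 0 < m ∧ ∃ p : ℤ,
        ((i : ℝ) - 1) / k ≤ (p : ℝ) / m ∧ (p : ℝ) / m ≤ (i : ℝ) / k} := by
      refine ⟨by omega, p, ?_, ?_⟩
      · rw [hcastA]; exact hin.1
      · rw [hcastA]; exact hin.2
    have h1 := hleast.2 hamem
    have h2 : (a.toNat : ℤ) ≤ (Q:ℤ) := by rwa [Int.toNat_of_nonneg (le_of_lt ha0)]
    omega
  push_neg at hnotin
  have habs := abs_le.mp hap
  rcases le_or_gt (((i:ℝ) - 1)/(k:ℝ)) ((p:ℝ)/(a:ℝ)) with hge | hlt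
  · -- p/a > i/k
    have hgt : (i:ℝ)/(k:ℝ) < (p:ℝ)/(a:ℝ) := hnotin hge
    set D : ℤ := p * (k:ℤ) - (i:ℤ) * a with hD
    have hDr : (D:ℝ) = (p:ℝ)*(k:ℝ) - (i:ℝ)*(a:ℝ) := by rw [hD]; push_cast; ring
    have hD1 : 1 ≤ D := by
      have h' : (i:ℝ) * (a:ℝ) < (p:ℝ) * (k:ℝ) := by
        rw [div_lt_div_iff₀ hK0 haR] at hgt
        linarith
      have h'' : (i:ℤ) * a < p * (k:ℤ) := by exact_mod_cast h'
      omega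
    have hD1R : (1:ℝ) ≤ (D:ℝ) := by exact_mod_cast hD1
    have h2 : (p:ℝ) - (a:ℝ)*((2*(i:ℝ) - 1)/(2*(k:ℝ))) ≤ 1/((Q:ℝ)+1) := by
      linarith [habs.1]
    have e1 : (p:ℝ)*(2*(k:ℝ)) - (a:ℝ)*(2*(i:ℝ)-1) ≤ (2*(k:ℝ))/((Q:ℝ)+1) := by
      have hm := mul_le_mul_of_nonneg_right h2 (le_of_lt (by positivity : (0:ℝ) < 2*(k:ℝ)))
      calc (p:ℝ)*(2*(k:ℝ)) - (a:ℝ)*(2*(i:ℝ)-1)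
          = ((p:ℝ) - (a:ℝ)*((2*(i:ℝ) - 1)/(2*(k:ℝ)))) * (2*(k:ℝ)) := by
            field_simp
        _ ≤ 1/((Q:ℝ)+1) * (2*(k:ℝ)) := hm
        _ = (2*(k:ℝ))/((Q:ℝ)+1) := by ring
    rw [le_div_iff₀ hu] at e1
    have key1 : (D:ℝ) * ((Q:ℝ)+1) < (k:ℝ) := by
      rw [hDr]; nlinarith [haR, hD1R]
    have key2 : (a:ℝ) * ((Q:ℝ)+1) ≤ 2*(k:ℝ) := by nlinarith [hD1R, hDr]
    refine ⟨a.toNat, i, p, by omega, ?_, hik, Or.inl rfl, ?_, ?_⟩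
    · have hc : ((a.toNat * (Q+1) : ℕ) : ℝ) ≤ ((2*k : ℕ):ℝ) := by
        push_cast
        rw [hcastA]
        exact key2
      exact_mod_cast hc
    · have hta : ((a.toNat : ℕ) : ℤ) = a := Int.toNat_of_nonneg (le_of_lt ha0)
      rw [hta]
      have hh : p * (k:ℤ) - (i:ℤ) * a = D := by rw [hD]
      rw [hh, abs_of_pos (by omega : (0:ℤ) < D)]
      omega
    · have hta : ((a.toNat : ℕ) : ℤ) = a := Int.toNat_of_nonneg (le_of_lt ha0)
      rw [hta]
      have hh : p * (k:ℤ) - (i:ℤ) * a = D := by rw [hD]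
      rw [hh, abs_of_pos (by omega : (0:ℤ) < D)]
      exact_mod_cast key1
  · -- p/a < (i-1)/k
    set D : ℤ := ((i:ℤ) - 1) * a - p * (k:ℤ) with hD
    have hDr : (D:ℝ) = ((i:ℝ) - 1)*(a:ℝ) - (p:ℝ)*(k:ℝ) := by rw [hD]; push_cast; ring
    have hD1 : 1 ≤ D := by
      have h' : (p:ℝ) * (k:ℝ) < ((i:ℝ) - 1) * (a:ℝ) := by
        rw [div_lt_div_iff₀ haR hK0] at hlt
        linarith
      have h'' : p * (k:ℤ) < ((i:ℤ) - 1) * a := by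
        have hcast : ((p * (k:ℤ) : ℤ):ℝ) < ((((i:ℤ)-1) * a : ℤ):ℝ) := by push_cast; linarith
        exact_mod_cast hcast
      omega
    have hD1R : (1:ℝ) ≤ (D:ℝ) := by exact_mod_cast hD1
    have h2 : (a:ℝ)*((2*(i:ℝ) - 1)/(2*(k:ℝ))) - (p:ℝ) ≤ 1/((Q:ℝ)+1) := by
      linarith [habs.2]
    have e1 : (a:ℝ)*(2*(i:ℝ)-1) - (p:ℝ)*(2*(k:ℝ)) ≤ (2*(k:ℝ))/((Q:ℝ)+1) := by
      have hm := mul_le_mul_of_nonneg_right h2 (le_of_lt (by positivity : (0:ℝ) < 2*(k:ℝ)))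
      calc (a:ℝ)*(2*(i:ℝ)-1) - (p:ℝ)*(2*(k:ℝ))
          = ((a:ℝ)*((2*(i:ℝ) - 1)/(2*(k:ℝ))) - (p:ℝ)) * (2*(k:ℝ)) := by
            field_simp
        _ ≤ 1/((Q:ℝ)+1) * (2*(k:ℝ)) := hm
        _ = (2*(k:ℝ))/((Q:ℝ)+1) := by ring
    rw [le_div_iff₀ hu] at e1
    have key1 : (D:ℝ) * ((Q:ℝ)+1) < (k:ℝ) := by
      rw [hDr]; nlinarith [haR, hD1R]
    have key2 : (a:ℝ) * ((Q:ℝ)+1) ≤ 2*(k:ℝ) := by nlinarith [hD1R, hDr]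
    refine ⟨a.toNat, i - 1, p, by omega, ?_, by omega, Or.inr (by omega), ?_, ?_⟩
    · have hc : ((a.toNat * (Q+1) : ℕ) : ℝ) ≤ ((2*k : ℕ):ℝ) := by
        push_cast
        rw [hcastA]
        exact key2
      exact_mod_cast hc
    · have hta : ((a.toNat : ℕ) : ℤ) = a := Int.toNat_of_nonneg (le_of_lt ha0)
      rw [hta]
      have hji : ((i - 1 : ℕ) : ℤ) = (i:ℤ) - 1 := by omega
      rw [hji]
      have hh : p * (k:ℤ) - ((i:ℤ) - 1) * a = -D := by rw [hD]; ring
      rw [hh, abs_neg, abs_of_pos (by omega : (0:ℤ) < D)]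
      omega
    · have hta : ((a.toNat : ℕ) : ℤ) = a := Int.toNat_of_nonneg (le_of_lt ha0)
      rw [hta]
      have hji : ((i - 1 : ℕ) : ℤ) = (i:ℤ) - 1 := by omega
      rw [hji]
      have hh : p * (k:ℤ) - ((i:ℤ) - 1) * a = -D := by rw [hD]; ring
      rw [hh, abs_neg, abs_of_pos (by omega : (0:ℤ) < D)]
      exact_mod_cast key1

lemma Bbound (k Q : ℕ) (hk : 2 ≤ k) (q : ℕ → ℕ)
    (h : ∀ i ∈ Finset.Icc 1 k, IsLeast {m : ℕ | 0 < m ∧ ∃ p : ℤ,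
        ((i : ℝ) - 1) / k ≤ (p : ℝ) / m ∧ (p : ℝ) / m ≤ (i : ℝ) / k} (q i))
    (hQ1 : 1 ≤ Q) :
    ((Finset.Icc 1 k).filter (fun i => Q < q i)).card * (Q + 1)^2 ≤ 8 * k^2 := by
  classical
  set M := 2 * k / (Q + 1) with hM
  set T := ((Finset.Icc 1 (2*k)) ×ˢ (Finset.Icc 0 k)).filter (fun x : ℕ × ℕ =>
      x.1 * (Q + 1) ≤ 2 * k ∧ ∃ p : ℤ,
        0 < |p * (k:ℤ) - (x.2 : ℤ) * (x.1 : ℤ)| ∧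
        |p * (k:ℤ) - (x.2 : ℤ) * (x.1 : ℤ)| * ((Q:ℤ) + 1) < (k:ℤ)) with hT
  have hsub : (Finset.Icc 1 k).filter (fun i => Q < q i) ⊆
      T.image Prod.snd ∪ T.image (fun x => x.2 + 1) := by
    intro i hi
    simp only [Finset.mem_filter, Finset.mem_Icc] at hi
    obtain ⟨⟨hi1, hik⟩, hQi⟩ := hi
    obtain ⟨q', j, p, hq1, hq2, hjk, hij, habs0, habsQ⟩ :=
      key_lemma k i Q hk hi1 hik (q i) (h i (Finset.mem_Icc.mpr ⟨hi1, hik⟩)) hQ1 hQi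
    have hmemT : (q', j) ∈ T := by
      simp only [hT, Finset.mem_filter, Finset.mem_product, Finset.mem_Icc]
      exact ⟨⟨⟨hq1, le_trans (Nat.le_mul_of_pos_right _ (by omega)) hq2⟩, ⟨Nat.zero_le _, hjk⟩⟩,
        hq2, p, habs0, habsQ⟩
    rcases hij with rfl | hji
    · exact Finset.mem_union_left _ (Finset.mem_image.mpr ⟨(q', i), hmemT, rfl⟩)
    · refine Finset.mem_union_right _ (Finset.mem_image.mpr ⟨(q', j), hmemT, ?_⟩)
      omega
  have hTcard : T.card ≤ M * (2 * k / (Q + 1)) := by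
    have hmaps : ∀ x ∈ T, x.1 ∈ Finset.Icc 1 M := by
      intro x hx
      simp only [hT, Finset.mem_filter, Finset.mem_product, Finset.mem_Icc] at hx
      rw [Finset.mem_Icc]
      refine ⟨hx.1.1.1, ?_⟩
      rw [hM, Nat.le_div_iff_mul_le (by omega)]
      exact hx.2.1
    rw [Finset.card_eq_sum_card_fiberwise hmaps]
    have hfiber : ∀ q' ∈ Finset.Icc 1 M,
        (T.filter (fun x => x.1 = q')).card ≤ 2 * k / (Q + 1) := by
      intro q' hq'
      rw [Finset.mem_Icc] at hq'
      have hd := Dbound k Q q' (by omega) (by omega)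
      have hb : (((Finset.Icc 0 k)).filter (fun j : ℕ => ∃ p : ℤ,
          0 < |p * (k:ℤ) - (j : ℤ) * (q':ℤ)| ∧
          |p * (k:ℤ) - (j : ℤ) * (q':ℤ)| * ((Q:ℤ) + 1) < (k:ℤ))).card ≤ 2 * k / (Q + 1) := by
        rw [Nat.le_div_iff_mul_le (by omega)]
        exact hd
      refine le_trans (Finset.card_le_card_of_injOn Prod.snd ?_ ?_) hb
      · intro x hx
        simp only [Finset.mem_coe, hT, Finset.mem_filter, Finset.mem_product,
          Finset.mem_Icc] at hx ⊢
        obtain ⟨⟨⟨_, _⟩, hj⟩, ⟨_, hp⟩⟩ := hx.1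
        rcases hx with ⟨hx1, hx2⟩
        subst hx2
        exact ⟨hj, hp⟩
      · intro x1 hx1 x2 hx2 he
        simp only [Finset.mem_coe, Finset.mem_filter] at hx1 hx2
        exact Prod.ext (hx1.2.trans hx2.2.symm) he
    calc ∑ q' ∈ Finset.Icc 1 M, (T.filter (fun x => x.1 = q')).card
        ≤ ∑ q' ∈ Finset.Icc 1 M, (2 * k / (Q + 1)) := Finset.sum_le_sum hfiber
      _ = (Finset.Icc 1 M).card * (2 * k / (Q + 1)) := by rw [Finset.sum_const, smul_eq_mul]
      _ = M * (2 * k / (Q + 1)) := by rw [Nat.card_Icc, Nat.add_sub_cancel]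
  have hcard : ((Finset.Icc 1 k).filter (fun i => Q < q i)).card ≤ 2 * (M * (2 * k / (Q + 1))) := by
    calc ((Finset.Icc 1 k).filter (fun i => Q < q i)).card
        ≤ (T.image Prod.snd ∪ T.image (fun x => x.2 + 1)).card := Finset.card_le_card hsub
      _ ≤ (T.image Prod.snd).card + (T.image (fun x => x.2 + 1)).card := Finset.card_union_le _ _
      _ ≤ T.card + T.card := Nat.add_le_add (Finset.card_image_le) (Finset.card_image_le)
      _ = 2 * T.card := by ring
      _ ≤ 2 * (M * (2 * k / (Q + 1))) := by omega
  calc ((Finset.Icc 1 k).filter (fun i => Q < q i)).card * (Q + 1)^2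
      ≤ 2 * (M * (2 * k / (Q + 1))) * (Q + 1)^2 := Nat.mul_le_mul_right _ hcard
    _ = 2 * ((M * (Q+1)) * ((2 * k / (Q + 1)) * (Q+1))) := by ring
    _ ≤ 2 * ((2*k) * (2*k)) := by
        have h1 : M * (Q+1) ≤ 2*k := by rw [hM]; exact Nat.div_mul_le_self _ _
        have h2 : (2 * k / (Q + 1)) * (Q+1) ≤ 2*k := Nat.div_mul_le_self _ _
        exact Nat.mul_le_mul_left _ (Nat.mul_le_mul h1 h2)
    _ = 8 * k^2 := by ring

lemma layer (k : ℕ) (q : ℕ → ℕ) (hq : ∀ i ∈ Finset.Icc 1 k, q i ≤ k) :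
    ∑ i ∈ Finset.Icc 1 k, q i
      = ∑ Q ∈ Finset.range k, ((Finset.Icc 1 k).filter (fun i => Q < q i)).card := by
  have h1 : ∀ Q, ((Finset.Icc 1 k).filter (fun i => Q < q i)).card
      = ∑ i ∈ Finset.Icc 1 k, if Q < q i then 1 else 0 := by
    intro Q; rw [Finset.card_filter]
  simp_rw [h1]
  rw [Finset.sum_comm]
  apply Finset.sum_congr rfl
  intro i hi
  symm
  have h2 : (Finset.range k).filter (fun Q => Q < q i) = Finset.range (q i) := by
    ext Q
    simp only [Finset.mem_filter, Finset.mem_range]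
    have := hq i hi
    omega
  calc (∑ Q ∈ Finset.range k, if Q < q i then 1 else 0)
      = ((Finset.range k).filter (fun Q => Q < q i)).card := (Finset.card_filter _ _).symm
    _ = (Finset.range (q i)).card := by rw [h2]
    _ = q i := Finset.card_range _


set_option maxHeartbeats 1000000 in
/-- If `q i` is, for each `i ∈ {1, …, k}`, the least positive integer `q` such that the
interval `[(i-1)/k, i/k]` contains a rational with denominator `q`, then
`∑ q_i ≤ C · k^{3/2} · (log k)^{1/2}` for an absolute constant `C`. -/
theorem farey_denominator_sum :
    ∃ C : ℝ, 0 < C ∧ ∀ k : ℕ, 2 ≤ k → ∀ q : ℕ → ℕ,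
      (∀ i ∈ Finset.Icc 1 k,
        IsLeast {m : ℕ | 0 < m ∧ ∃ p : ℤ,
          ((i : ℝ) - 1) / k ≤ (p : ℝ) / m ∧ (p : ℝ) / m ≤ (i : ℝ) / k} (q i)) →
      (∑ i ∈ Finset.Icc 1 k, (q i : ℝ)) ≤
        C * (k : ℝ) ^ ((3 : ℝ) / 2) * Real.sqrt (Real.log k) := by
  refine ⟨100, by norm_num, ?_⟩
  intro k hk q h
  have hK0 : (0:ℝ) < (k:ℝ) := by exact_mod_cast (by omega : 0 < k)
  have hqk : ∀ i ∈ Finset.Icc 1 k, q i ≤ k := by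
    intro i hi
    rw [Finset.mem_Icc] at hi
    apply (h i (Finset.mem_Icc.mpr hi)).2
    refine ⟨by omega, (i:ℤ) - 1, ?_, ?_⟩
    · apply le_of_eq
      push_cast
      ring
    · rw [div_le_div_iff_of_pos_right hK0]
      push_cast
      linarith
  set m := Nat.sqrt (8*k) with hm
  have hm4 : 4 ≤ m := Nat.le_sqrt.mpr (by omega)
  set s := Real.sqrt (k:ℝ) with hs
  have hs0 : 0 < s := Real.sqrt_pos.mpr hK0
  have hs2 : s^2 = (k:ℝ) := Real.sq_sqrt (le_of_lt hK0)
  have hmR : (m:ℝ) ≤ 3 * s := by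
    have h2 : m * m ≤ 8 * k := Nat.sqrt_le (8*k)
    have h1 : (m:ℝ) * (m:ℝ) ≤ 8 * (k:ℝ) := by exact_mod_cast h2
    nlinarith [hs0, hs2, Nat.cast_nonneg (α := ℝ) m]
  set t := Real.sqrt 2 with ht
  have ht2 : t^2 = 2 := Real.sq_sqrt (by norm_num)
  have ht14 : (1.4:ℝ) ≤ t := by nlinarith [Real.sqrt_nonneg (2:ℝ)]
  have hm1R : 2 * t * s ≤ (m:ℝ) + 1 := by
    have h2 : 8 * k < (m+1)^2 := Nat.lt_succ_sqrt' (8*k)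
    have h1 : 8 * (k:ℝ) < ((m:ℝ)+1)^2 := by exact_mod_cast h2
    nlinarith [hs0, hs2, Real.sqrt_nonneg (2:ℝ), ht2,
      Nat.cast_nonneg (α := ℝ) m]
  have hlayer := layer k q hqk
  have hcast : (∑ i ∈ Finset.Icc 1 k, (q i : ℝ))
      = ∑ Q ∈ Finset.range k, (((Finset.Icc 1 k).filter (fun i => Q < q i)).card : ℝ) := by
    rw [← Nat.cast_sum, hlayer, Nat.cast_sum]
  rw [hcast]
  rw [← Finset.sum_filter_add_sum_filter_not (Finset.range k) (fun Q => Q < m)]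
  have hpart1 : ∑ Q ∈ (Finset.range k).filter (fun Q => Q < m),
      (((Finset.Icc 1 k).filter (fun i => Q < q i)).card : ℝ) ≤ (m:ℝ) * k := by
    calc ∑ Q ∈ (Finset.range k).filter (fun Q => Q < m),
        (((Finset.Icc 1 k).filter (fun i => Q < q i)).card : ℝ)
        ≤ ∑ Q ∈ (Finset.range k).filter (fun Q => Q < m), (k:ℝ) := by
          apply Finset.sum_le_sum
          intro Q _
          have h1 : ((Finset.Icc 1 k).filter (fun i => Q < q i)).card ≤ k := by
            calc ((Finset.Icc 1 k).filter (fun i => Q < q i)).card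
                ≤ (Finset.Icc 1 k).card := Finset.card_filter_le _ _
              _ = k := by rw [Nat.card_Icc, Nat.add_sub_cancel]
          exact_mod_cast h1
      _ = ((Finset.range k).filter (fun Q => Q < m)).card * (k:ℝ) := by
          rw [Finset.sum_const, nsmul_eq_mul]
      _ ≤ (m:ℝ) * k := by
          have h1 : ((Finset.range k).filter (fun Q => Q < m)).card ≤ m := by
            calc ((Finset.range k).filter (fun Q => Q < m)).card
                ≤ (Finset.range m).card := Finset.card_le_card (by
                  intro Q hQ
                  simp only [Finset.mem_filter, Finset.mem_range] at hQ ⊢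
                  exact hQ.2)
              _ = m := Finset.card_range _
          have h2 : (((Finset.range k).filter (fun Q => Q < m)).card : ℝ) ≤ (m:ℝ) := by
            exact_mod_cast h1
          nlinarith
  have hfilter2 : (Finset.range k).filter (fun Q => ¬ Q < m) = Finset.Ico m k := by
    ext Q
    simp only [Finset.mem_filter, Finset.mem_range, Finset.mem_Ico]
    omega
  have hpart2 : ∑ Q ∈ (Finset.range k).filter (fun Q => ¬ Q < m),
      (((Finset.Icc 1 k).filter (fun i => Q < q i)).card : ℝ)
      ≤ 16 * (k:ℝ)^2 / ((m:ℝ)+1) := by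
    rw [hfilter2]
    have hterm : ∀ Q ∈ Finset.Ico m k,
        (((Finset.Icc 1 k).filter (fun i => Q < q i)).card : ℝ)
          ≤ 8 * (k:ℝ)^2 / (((Q:ℝ)+1)^2) := by
      intro Q hQ
      rw [Finset.mem_Ico] at hQ
      have hb := Bbound k Q hk q h (by omega)
      have hbR : (((Finset.Icc 1 k).filter (fun i => Q < q i)).card : ℝ) * ((Q:ℝ)+1)^2
          ≤ 8 * (k:ℝ)^2 := by exact_mod_cast hb
      rw [le_div_iff₀ (by positivity)]
      exact hbR
    calc ∑ Q ∈ Finset.Ico m k, (((Finset.Icc 1 k).filter (fun i => Q < q i)).card : ℝ)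
        ≤ ∑ Q ∈ Finset.Ico m k, 8 * (k:ℝ)^2 / (((Q:ℝ)+1)^2) := Finset.sum_le_sum hterm
      _ = 8 * (k:ℝ)^2 * ∑ Q ∈ Finset.Ico m k, ((((Q:ℝ)+1)^2)⁻¹) := by
          rw [Finset.mul_sum]
          apply Finset.sum_congr rfl
          intro Q _
          rw [div_eq_mul_inv]
      _ ≤ 8 * (k:ℝ)^2 * (2 / ((m:ℝ)+1)) := by
          apply mul_le_mul_of_nonneg_left _ (by positivity)
          have hmap : ∑ Q ∈ Finset.Ico m k, ((((Q:ℝ)+1)^2)⁻¹)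
              = ∑ n ∈ Finset.Ioo m (k+1), (((n:ℝ))^2)⁻¹ := by
            rw [Finset.sum_Ico_eq_sum_range]
            have : Finset.Ioo m (k+1) = Finset.Ico (m+1) (k+1) := by
              ext n; simp only [Finset.mem_Ioo, Finset.mem_Ico]; omega
            rw [this, Finset.sum_Ico_eq_sum_range]
            have hlen : k + 1 - (m + 1) = k - m := by omega
            rw [hlen]
            apply Finset.sum_congr rfl
            intro i _
            push_cast
            ring_nf
          rw [hmap]
          exact sum_Ioo_inv_sq_le m (k+1)
      _ = 16 * (k:ℝ)^2 / ((m:ℝ)+1) := by ring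
  -- final numeric assembly
  have hks : s^3 = (k:ℝ) ^ ((3:ℝ)/2) := by
    rw [hs, Real.sqrt_eq_rpow, ← Real.rpow_natCast ((k:ℝ)^((1:ℝ)/2)) 3,
      ← Real.rpow_mul (le_of_lt hK0)]
    norm_num
  have hlog : (0.8:ℝ) ≤ Real.sqrt (Real.log k) := by
    have h2 : Real.log 2 ≤ Real.log k :=
      Real.log_le_log (by norm_num) (by exact_mod_cast hk)
    have h3 := Real.log_two_gt_d9
    have h4 : (0.64:ℝ) ≤ Real.log k := by linarith
    calc (0.8:ℝ) = Real.sqrt 0.64 := by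
          rw [show (0.64:ℝ) = 0.8^2 by norm_num, Real.sqrt_sq (by norm_num)]
      _ ≤ Real.sqrt (Real.log k) := Real.sqrt_le_sqrt h4
  have hb1 : (m:ℝ) * k ≤ 3 * s^3 := by nlinarith [hs0, hs2]
  have hb2 : 16 * (k:ℝ)^2 / ((m:ℝ)+1) ≤ 6 * s^3 := by
    have hpos : (0:ℝ) < 2 * t * s := by nlinarith
    calc 16 * (k:ℝ)^2 / ((m:ℝ)+1) ≤ 16 * (k:ℝ)^2 / (2 * t * s) := by
          apply div_le_div_of_nonneg_left (by positivity) hpos hm1R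
      _ ≤ 6 * s^3 := by
          rw [div_le_iff₀ hpos]
          have hs4 : s^4 = (k:ℝ)^2 := by rw [← hs2]; ring
          nlinarith [hs4, ht14, hK0, mul_pos hK0 hK0]
  have hrhs : 9 * s^3 ≤ 100 * (k:ℝ) ^ ((3:ℝ)/2) * Real.sqrt (Real.log (k:ℝ)) := by
    rw [← hks]
    nlinarith [hs0, hlog, pow_pos hs0 3]
  linarith [hpart1, hpart2, hb1, hb2, hrhs]
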